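/- Given a countable family {β_M}_{M ∈ ℕ} of class-KL functions, there exist a class-K∞ function γ̂ and a class-KL function β̂ such that β_M(r, t) ≤ γ̂(M)·β̂(r, t) for all r, t ≥ 0 and all M ∈ ℕ with M ≥ 1. -/

import Mathlib

/-- A function of class `K`: continuous, strictly increasing on `[0,∞)`, zero at zero. -/
def ClassK (f : ℝ → ℝ) : Prop :=
  ContinuousOn f (Set.Ici 0) ∧ StrictMonoOn f (Set.Ici 0) ∧ f 0 = 0

/-- A function of class `K∞`: class `K` and unbounded. -/
def ClassKInf (f : ℝ → ℝ) : Prop :=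
  ClassK f ∧ Filter.Tendsto f Filter.atTop Filter.atTop

/-- A function of class `KL`. -/
def ClassKL (β : ℝ → ℝ → ℝ) : Prop :=
  (∀ t, 0 ≤ t → ClassK (fun r => β r t)) ∧
  (∀ r, 0 ≤ r → AntitoneOn (fun t => β r t) (Set.Ici 0) ∧
    Filter.Tendsto (fun t => β r t) Filter.atTop (nhds 0))


open Filter

noncomputable def ramp (e : ℕ → ℝ) (s : ℝ) : ℝ := ∑' m, e m * min 1 (max 0 (s - m))

lemma ramp_term_zero (e : ℕ → ℝ) {s : ℝ} {m : ℕ} (h : s ≤ m) :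
    e m * min 1 (max 0 (s - m)) = 0 := by
  have : max (0:ℝ) (s - m) = 0 := max_eq_left (by linarith)
  rw [this]
  simp

lemma ramp_term_nonneg {e : ℕ → ℝ} (he : ∀ m, 0 ≤ e m) (s : ℝ) (m : ℕ) :
    0 ≤ e m * min 1 (max 0 (s - m)) :=
  mul_nonneg (he m) (le_min (by norm_num) (le_max_left _ _))

lemma ramp_summable (e : ℕ → ℝ) (s : ℝ) :
    Summable (fun m : ℕ => e m * min 1 (max 0 (s - m))) := by
  apply summable_of_ne_finset_zero (s := Finset.range (⌈s⌉₊ + 1))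
  intro m hm
  simp only [Finset.mem_range, not_lt] at hm
  apply ramp_term_zero
  have h1 : s ≤ (⌈s⌉₊ : ℝ) + 1 := by
    rcases le_or_gt s 0 with h | h
    · have : (0:ℝ) ≤ (⌈s⌉₊ : ℝ) := Nat.cast_nonneg _
      linarith
    · linarith [Nat.le_ceil s]
  calc s ≤ (⌈s⌉₊ : ℝ) + 1 := h1
    _ ≤ m := by exact_mod_cast hm

lemma ramp_eq_sum (e : ℕ → ℝ) {s : ℝ} {N : ℕ} (h : s < N) :
    ramp e s = ∑ m ∈ Finset.range N, e m * min 1 (max 0 (s - m)) := by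
  apply tsum_eq_sum
  intro m hm
  simp only [Finset.mem_range, not_lt] at hm
  exact ramp_term_zero e (h.le.trans (by exact_mod_cast hm))

lemma ramp_nonneg {e : ℕ → ℝ} (he : ∀ m, 0 ≤ e m) (s : ℝ) : 0 ≤ ramp e s :=
  tsum_nonneg (ramp_term_nonneg he s)

lemma ramp_mono {e : ℕ → ℝ} (he : ∀ m, 0 ≤ e m) : Monotone (ramp e) := by
  intro s s' hss
  apply Summable.tsum_le_tsum _ (ramp_summable e s) (ramp_summable e s')
  intro m
  apply mul_le_mul_of_nonneg_left _ (he m)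
  exact min_le_min le_rfl (max_le_max le_rfl (by linarith))

lemma ramp_zero_of_nonpos (e : ℕ → ℝ) {s : ℝ} (h : s ≤ 0) : ramp e s = 0 := by
  have : ∀ m : ℕ, e m * min 1 (max 0 (s - m)) = 0 := fun m =>
    ramp_term_zero e (h.trans (by positivity))
  rw [ramp]
  simp only [this, tsum_zero]

lemma ramp_continuous (e : ℕ → ℝ) : Continuous (ramp e) := by
  rw [continuous_iff_continuousAt]
  intro x
  have hx : x < ((⌈x⌉₊ + 1 : ℕ) : ℝ) := by
    push_cast
    rcases le_or_gt x 0 with h | h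
    · have : (0:ℝ) ≤ (⌈x⌉₊ : ℝ) := Nat.cast_nonneg _
      linarith
    · linarith [Nat.le_ceil x]
  set N := ⌈x⌉₊ + 1 with hN
  have hopen : Set.Iio ((N : ℕ) : ℝ) ∈ nhds x := isOpen_Iio.mem_nhds hx
  have hc : ContinuousAt (fun s : ℝ => ∑ m ∈ Finset.range N, e m * min 1 (max 0 (s - m))) x := by
    apply Continuous.continuousAt
    apply continuous_finset_sum
    intro m _
    exact continuous_const.mul (continuous_const.min
      (continuous_const.max ((continuous_id.sub continuous_const))))
  apply hc.congr
  filter_upwards [hopen] with s hs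
  exact (ramp_eq_sum e hs).symm

lemma le_ramp {e : ℕ → ℝ} (he : ∀ m, 0 ≤ e m) {s : ℝ} {m : ℕ} (h : (m : ℝ) + 1 ≤ s) :
    e m ≤ ramp e s := by
  have heq : e m * min 1 (max 0 (s - m)) = e m := by
    have h1 : (1:ℝ) ≤ s - m := by linarith
    rw [max_eq_right (by linarith), min_eq_left h1, mul_one]
  calc e m = e m * min 1 (max 0 (s - m)) := heq.symm
    _ ≤ ramp e s := Summable.le_tsum (ramp_summable e s) m (fun m' _ => ramp_term_nonneg he s m')



section helpers
variable {β : ℕ → ℝ → ℝ → ℝ} (hβ : ∀ M : ℕ, ClassKL (β M))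
include hβ

lemma monoR (M : ℕ) {t r r' : ℝ} (ht : 0 ≤ t) (hr : 0 ≤ r) (hrr : r ≤ r') :
    β M r t ≤ β M r' t :=
  ((hβ M).1 t ht).2.1.monotoneOn hr (hr.trans hrr) hrr

lemma zeroR (M : ℕ) {t : ℝ} (ht : 0 ≤ t) : β M 0 t = 0 := ((hβ M).1 t ht).2.2

lemma βnonneg (M : ℕ) {r t : ℝ} (hr : 0 ≤ r) (ht : 0 ≤ t) : 0 ≤ β M r t := by
  have := monoR hβ M ht le_rfl hr
  rwa [zeroR hβ M ht] at this

lemma antiT (M : ℕ) {r t t' : ℝ} (hr : 0 ≤ r) (ht : 0 ≤ t) (htt : t ≤ t') :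
    β M r t' ≤ β M r t :=
  ((hβ M).2 r hr).1 ht (ht.trans htt) htt

end helpers

noncomputable section

open Real Filter

def sM (β : ℕ → ℝ → ℝ → ℝ) (M : ℕ) : ℝ := Real.sqrt (β M M 0)

def gseq (β : ℕ → ℝ → ℝ → ℝ) (M : ℕ) : ℝ := 2^(3*M) * (1 + sM β M)^2

def cseq (β : ℕ → ℝ → ℝ → ℝ) (n : ℕ) : ℝ :=
  2^(2*n) * ∑ M ∈ Finset.range (n+1), (1 + Real.sqrt (β M n 0))^2

def ghat (β : ℕ → ℝ → ℝ → ℝ) (s : ℝ) : ℝ := s + ramp (fun m => gseq β (m+1)) s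

def a0term (β : ℕ → ℝ → ℝ → ℝ) (M : ℕ) (r : ℝ) : ℝ :=
  (2:ℝ)⁻¹^M * (Real.sqrt (β M (min (max r 0) M) 0) / (1 + sM β M))

def a0 (β : ℕ → ℝ → ℝ → ℝ) (r : ℝ) : ℝ := ∑' M, a0term β M r

def afun (β : ℕ → ℝ → ℝ → ℝ) (r : ℝ) : ℝ := r + a0 β r + ramp (fun m => cseq β (m+2)) r

def Bfun (β : ℕ → ℝ → ℝ → ℝ) (k : ℕ) (t : ℝ) : ℝ :=
  ∑ M ∈ Finset.range (k+1), β M k (max t 0)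

def bterm (β : ℕ → ℝ → ℝ → ℝ) (k : ℕ) (t : ℝ) : ℝ :=
  (2:ℝ)⁻¹^k * min 1 (Real.sqrt (Bfun β k t))

def bfun (β : ℕ → ℝ → ℝ → ℝ) (t : ℝ) : ℝ := Real.exp (-t) + ∑' k, bterm β k t

end

section main
open Real Filter
variable {β : ℕ → ℝ → ℝ → ℝ} (hβ : ∀ M : ℕ, ClassKL (β M))

lemma sM_nonneg (M : ℕ) : 0 ≤ sM β M := Real.sqrt_nonneg _

lemma gseq_nonneg (M : ℕ) : 0 ≤ gseq β M := by
  apply mul_nonneg (by positivity)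
  positivity

lemma cseq_nonneg (n : ℕ) : 0 ≤ cseq β n := by
  apply mul_nonneg (by positivity)
  exact Finset.sum_nonneg fun M _ => sq_nonneg _

lemma one_add_sM_pos (M : ℕ) : (0:ℝ) < 1 + sM β M := by
  have := sM_nonneg (β := β) M; linarith

omit hβ in
lemma clamp_mem_aux : True := trivial

include hβ

lemma clamp_mem (r : ℝ) (M : ℕ) : min (max r 0) (M:ℝ) ∈ Set.Icc (0:ℝ) (M:ℝ) :=
  ⟨le_min (le_max_right _ _) (Nat.cast_nonneg _), min_le_right _ _⟩

lemma a0term_nonneg (M : ℕ) (r : ℝ) : 0 ≤ a0term β M r := by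
  have := one_add_sM_pos (β := β) M
  have : (0:ℝ) ≤ Real.sqrt (β M (min (max r 0) M) 0) := Real.sqrt_nonneg _
  unfold a0term
  positivity

lemma a0term_le (M : ℕ) (r : ℝ) : a0term β M r ≤ (2:ℝ)⁻¹^M := by
  unfold a0term
  have hc := clamp_mem (hβ := hβ) r M
  have h1 : β M (min (max r 0) M) 0 ≤ β M M 0 :=
    monoR hβ M le_rfl hc.1 hc.2
  have h2 : Real.sqrt (β M (min (max r 0) M) 0) ≤ 1 + sM β M :=
    (Real.sqrt_le_sqrt h1).trans (by have := sM_nonneg (β := β) M; unfold sM; linarith)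
  calc (2:ℝ)⁻¹^M * (Real.sqrt (β M (min (max r 0) M) 0) / (1 + sM β M))
      ≤ (2:ℝ)⁻¹^M * 1 := by
        apply mul_le_mul_of_nonneg_left _ (by positivity)
        rw [div_le_one (one_add_sM_pos M)]
        exact h2
    _ = (2:ℝ)⁻¹^M := mul_one _

lemma a0_summable (r : ℝ) : Summable (fun M => a0term β M r) :=
  Summable.of_nonneg_of_le (fun M => a0term_nonneg hβ M r) (fun M => a0term_le hβ M r)
    (summable_geometric_of_lt_one (by norm_num) (by norm_num))

lemma a0_nonneg (r : ℝ) : 0 ≤ a0 β r := tsum_nonneg (fun M => a0term_nonneg hβ M r)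

lemma a0_mono : Monotone (a0 β) := by
  intro r r' hrr
  apply Summable.tsum_le_tsum _ (a0_summable hβ r) (a0_summable hβ r')
  intro M
  unfold a0term
  have hmm : min (max r 0) (M:ℝ) ≤ min (max r' 0) (M:ℝ) :=
    min_le_min (max_le_max hrr le_rfl) le_rfl
  have h := monoR hβ M le_rfl (clamp_mem (hβ := hβ) r M).1 hmm
  have h2 := Real.sqrt_le_sqrt h
  have h3 := one_add_sM_pos (β := β) M
  gcongr

lemma a0_zero : a0 β 0 = 0 := by
  have : ∀ M : ℕ, a0term β M 0 = 0 := by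
    intro M
    unfold a0term
    have : min (max (0:ℝ) 0) (M:ℝ) = 0 := by
      rw [max_self]
      exact min_eq_left (by positivity)
    rw [this, zeroR hβ M le_rfl]
    simp
  unfold a0
  simp only [this, tsum_zero]

lemma a0_continuous : Continuous (a0 β) := by
  apply continuous_tsum (u := fun M => (2:ℝ)⁻¹^M)
  · intro M
    unfold a0term
    apply continuous_const.mul
    apply Continuous.div_const
    apply Real.continuous_sqrt.comp
    apply ContinuousOn.comp_continuous (g := fun x => β M x 0) (s := Set.Ici 0)
    · exact ((hβ M).1 0 le_rfl).1
    · exact (continuous_id.max continuous_const).min continuous_const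
    · intro x
      exact (clamp_mem (hβ := hβ) x M).1
  · exact summable_geometric_of_lt_one (by norm_num) (by norm_num)
  · intro M x
    rw [Real.norm_eq_abs, abs_of_nonneg (a0term_nonneg hβ M x)]
    exact a0term_le hβ M x

lemma a0_lower {r : ℝ} {M : ℕ} (hr : 0 ≤ r) (hrM : r ≤ M) :
    (2:ℝ)⁻¹^M * (Real.sqrt (β M r 0) / (1 + sM β M)) ≤ a0 β r := by
  have hc : min (max r 0) (M:ℝ) = r := by
    rw [max_eq_left hr, min_eq_left hrM]
  have : a0term β M r = (2:ℝ)⁻¹^M * (Real.sqrt (β M r 0) / (1 + sM β M)) := by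
    unfold a0term; rw [hc]
  rw [← this]
  exact Summable.le_tsum (a0_summable hβ r) M (fun M' _ => a0term_nonneg hβ M' r)

lemma Bfun_nonneg (k : ℕ) (t : ℝ) : 0 ≤ Bfun β k t :=
  Finset.sum_nonneg fun M _ => βnonneg hβ M (Nat.cast_nonneg k) (le_max_right _ _)

lemma bterm_nonneg (k : ℕ) (t : ℝ) : 0 ≤ bterm β k t :=
  mul_nonneg (by positivity) (le_min (by norm_num) (Real.sqrt_nonneg _))

omit hβ in
lemma bterm_le (k : ℕ) (t : ℝ) : bterm β k t ≤ (2:ℝ)⁻¹^k := by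
  unfold bterm
  calc (2:ℝ)⁻¹^k * min 1 (Real.sqrt (Bfun β k t)) ≤ (2:ℝ)⁻¹^k * 1 :=
        mul_le_mul_of_nonneg_left (min_le_left _ _) (by positivity)
    _ = (2:ℝ)⁻¹^k := mul_one _

lemma bfun_summable (t : ℝ) : Summable (fun k => bterm β k t) :=
  Summable.of_nonneg_of_le (fun k => bterm_nonneg hβ k t) (fun k => bterm_le k t)
    (summable_geometric_of_lt_one (by norm_num) (by norm_num))

lemma bfun_pos (t : ℝ) : 0 < bfun β t :=
  add_pos_of_pos_of_nonneg (Real.exp_pos _) (tsum_nonneg fun k => bterm_nonneg hβ k t)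

lemma bfun_anti : Antitone (bfun β) := by
  intro t t' htt
  unfold bfun
  apply add_le_add
  · exact Real.exp_le_exp.mpr (by linarith)
  · apply Summable.tsum_le_tsum _ (bfun_summable hβ t') (bfun_summable hβ t)
    intro k
    unfold bterm
    apply mul_le_mul_of_nonneg_left _ (by positivity)
    apply min_le_min le_rfl
    apply Real.sqrt_le_sqrt
    apply Finset.sum_le_sum
    intro M _
    exact antiT hβ M (Nat.cast_nonneg k) (le_max_right _ _) (max_le_max htt le_rfl)

lemma bfun_tendsto : Tendsto (bfun β) atTop (nhds 0) := by
  have h1 : Tendsto (fun t : ℝ => Real.exp (-t)) atTop (nhds 0) :=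
    Real.tendsto_exp_neg_atTop_nhds_zero
  have h2 : Tendsto (fun t => ∑' k, bterm β k t) atTop (nhds 0) := by
    have := tendsto_tsum_of_dominated_convergence (𝓕 := (atTop : Filter ℝ))
      (f := fun t k => bterm β k t) (g := fun _ : ℕ => (0:ℝ))
      (bound := fun k => (2:ℝ)⁻¹^k)
      (summable_geometric_of_lt_one (by norm_num) (by norm_num))
      ?_ ?_
    · simpa using this
    · intro k
      have hB : Tendsto (fun t => Bfun β k t) atTop (nhds 0) := by
        have : Tendsto (fun t : ℝ => max t 0) atTop atTop :=
          tendsto_atTop_mono (fun t => le_max_left t 0) tendsto_id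
        have hsum : Tendsto (fun t => ∑ M ∈ Finset.range (k+1), β M k (max t 0)) atTop
            (nhds (∑ M ∈ Finset.range (k+1), (0:ℝ))) := by
          apply tendsto_finset_sum
          intro M _
          exact (((hβ M).2 k (Nat.cast_nonneg k)).2).comp this
        simpa [Bfun] using hsum
      have hs : Tendsto (fun t => Real.sqrt (Bfun β k t)) atTop (nhds 0) := by
        have := (Real.continuous_sqrt.tendsto 0).comp hB
        simpa [Function.comp_def] using this
      have hm : Tendsto (fun t => min 1 (Real.sqrt (Bfun β k t))) atTop (nhds 0) := by
        have hc : Continuous (fun x : ℝ => min 1 x) := continuous_const.min continuous_id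
        have := (hc.tendsto (0:ℝ)).comp hs
        simpa [Function.comp_def] using this
      have := hm.const_mul ((2:ℝ)⁻¹^k)
      simpa [bterm] using this
    · filter_upwards with t
      intro k
      rw [Real.norm_eq_abs, abs_of_nonneg (bterm_nonneg hβ k t)]
      exact bterm_le k t
  have := h1.add h2
  simpa [show bfun β = fun t => Real.exp (-t) + ∑' k, bterm β k t from rfl] using this

lemma bfun_lower (M n : ℕ) {t : ℝ} (ht : 0 ≤ t) :
    (2:ℝ)⁻¹^(M+n) * min 1 (Real.sqrt (β M n t)) ≤ bfun β t := by
  have h1 : β M (n:ℝ) t ≤ Bfun β (M+n) t := by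
    have hmax : max t 0 = t := max_eq_left ht
    have h2 : β M (n:ℝ) t ≤ β M ((M+n : ℕ):ℝ) t := by
      apply monoR hβ M ht (Nat.cast_nonneg n)
      exact_mod_cast Nat.le_add_left n M
    calc β M (n:ℝ) t ≤ β M ((M+n : ℕ):ℝ) t := h2
      _ ≤ Bfun β (M+n) t := by
          unfold Bfun
          rw [hmax]
          apply Finset.single_le_sum (f := fun M' => β M' ((M+n : ℕ):ℝ) t)
            (fun M' _ => βnonneg hβ M' (Nat.cast_nonneg _) ht)
          simp [Nat.lt_succ_iff]
  have h3 : min 1 (Real.sqrt (β M n t)) ≤ min 1 (Real.sqrt (Bfun β (M+n) t)) :=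
    min_le_min le_rfl (Real.sqrt_le_sqrt h1)
  calc (2:ℝ)⁻¹^(M+n) * min 1 (Real.sqrt (β M n t))
      ≤ bterm β (M+n) t := mul_le_mul_of_nonneg_left h3 (by positivity)
    _ ≤ ∑' k, bterm β k t := Summable.le_tsum (bfun_summable hβ t) (M+n)
        (fun k _ => bterm_nonneg hβ k t)
    _ ≤ bfun β t := le_add_of_nonneg_left (Real.exp_pos _).le

omit hβ in
lemma ghat_classKInf : ClassKInf (ghat β) := by
  have he : ∀ m, 0 ≤ gseq β (m+1) := fun m => gseq_nonneg (β := β) (m+1)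
  have hsm : StrictMono (ghat β) := by
    have : Monotone (ramp (fun m => gseq β (m+1))) := ramp_mono he
    exact strictMono_id.add_monotone this
  refine ⟨⟨?_, hsm.strictMonoOn _, ?_⟩, ?_⟩
  · exact (continuous_id.add (ramp_continuous _)).continuousOn
  · unfold ghat
    rw [ramp_zero_of_nonpos _ le_rfl, add_zero]
  · apply tendsto_atTop_mono _ tendsto_id
    intro s
    exact le_add_of_nonneg_right (ramp_nonneg he s)

omit hβ in
lemma ghat_ge (M : ℕ) (hM : 1 ≤ M) :
    gseq β M ≤ ghat β (M:ℝ) ∧ (1:ℝ) ≤ ghat β (M:ℝ) := by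
  have he : ∀ m, 0 ≤ gseq β (m+1) := fun m => gseq_nonneg (β := β) (m+1)
  have h1 : ((M-1 : ℕ):ℝ) + 1 ≤ (M:ℝ) := by
    have : (M-1 : ℕ) + 1 = M := Nat.succ_pred_eq_of_pos hM
    exact_mod_cast this.le
  have h2 := le_ramp he h1
  have h3 : gseq β (M-1+1) = gseq β M := by congr 1; omega
  rw [h3] at h2
  constructor
  · unfold ghat
    have : (0:ℝ) ≤ (M:ℝ) := Nat.cast_nonneg M
    linarith
  · unfold ghat
    have h4 : (1:ℝ) ≤ (M:ℝ) := by exact_mod_cast hM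
    have := ramp_nonneg he (M:ℝ)
    linarith

lemma afun_nonneg {r : ℝ} (hr : 0 ≤ r) : 0 ≤ afun β r := by
  have h1 := a0_nonneg hβ r
  have h2 := ramp_nonneg (fun m => cseq_nonneg (β := β) (m+2)) r
  unfold afun; linarith

lemma afun_zero : afun β 0 = 0 := by
  unfold afun
  rw [a0_zero hβ, ramp_zero_of_nonpos _ le_rfl]
  ring

lemma afun_strictMono : StrictMono (afun β) := by
  have : Monotone (fun r => a0 β r + ramp (fun m => cseq β (m+2)) r) :=
    (a0_mono hβ).add (ramp_mono (fun m => cseq_nonneg (β := β) (m+2)))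
  have h := strictMono_id.add_monotone this
  intro x y hxy
  have := h hxy
  simpa [afun, add_assoc] using this

lemma afun_continuous : Continuous (afun β) :=
  (continuous_id.add (a0_continuous hβ)).add (ramp_continuous _)

lemma afun_sqrt_le {r : ℝ} {M : ℕ} (hr : 0 ≤ r) (hrM : r ≤ (M:ℝ)) :
    Real.sqrt (β M r 0) ≤ 2^M * (1 + sM β M) * afun β r := by
  have h0 := a0_lower hβ hr hrM
  have h1 : a0 β r ≤ afun β r := by
    have h2 := ramp_nonneg (fun m => cseq_nonneg (β := β) (m+2)) r
    unfold afun; linarith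
  have h3 : (2:ℝ)⁻¹^M * (Real.sqrt (β M r 0) / (1 + sM β M)) ≤ afun β r := h0.trans h1
  have h4 := one_add_sM_pos (β := β) M
  have h5 : Real.sqrt (β M r 0) =
      2^M * (1 + sM β M) * ((2:ℝ)⁻¹^M * (Real.sqrt (β M r 0) / (1 + sM β M))) := by
    field_simp
    rw [mul_assoc, ← mul_pow]; norm_num
  rw [h5]
  exact mul_le_mul_of_nonneg_left h3 (by positivity)

lemma afun_lower2 {r : ℝ} {n : ℕ} (hn : 2 ≤ n) (hnr : (n:ℝ) - 1 ≤ r) :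
    cseq β n ≤ afun β r := by
  have he : ∀ m, 0 ≤ cseq β (m+2) := fun m => cseq_nonneg (β := β) (m+2)
  have hc : ((n-2 : ℕ):ℝ) = (n:ℝ) - 2 := by
    have h0 : (n - 2 + 2 : ℕ) = n := Nat.sub_add_cancel hn
    have h1 : ((n - 2 + 2 : ℕ):ℝ) = (n:ℝ) := by exact_mod_cast congrArg Nat.cast h0
    push_cast at h1
    linarith
  have h1 : ((n-2 : ℕ):ℝ) + 1 ≤ r := by rw [hc]; linarith
  have h2 := le_ramp he h1
  have h3 : cseq β (n-2+2) = cseq β n := by congr 1; omega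
  rw [h3] at h2
  have hr0 : (0:ℝ) ≤ r := by
    have : (2:ℝ) ≤ (n:ℝ) := by exact_mod_cast hn
    linarith
  have h4 := a0_nonneg hβ r
  unfold afun
  linarith

omit hβ in
lemma cseq_single {M n : ℕ} (hMn : M ≤ n) :
    2^(2*n) * (1 + Real.sqrt (β M n 0))^2 ≤ cseq β n := by
  unfold cseq
  apply mul_le_mul_of_nonneg_left _ (by positivity)
  apply Finset.single_le_sum (f := fun M' => (1 + Real.sqrt (β M' (n:ℝ) 0))^2)
    (fun M' _ => sq_nonneg _)
  simp [Nat.lt_succ_iff, hMn]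

lemma key (M : ℕ) (hM : 1 ≤ M) (r t : ℝ) (hr : 0 ≤ r) (ht : 0 ≤ t) :
    β M r t ≤ ghat β (M:ℝ) * (afun β r * bfun β t) := by
  have hb := bfun_pos hβ t
  have hg1 := (ghat_ge (β := β) M hM).2
  rcases eq_or_lt_of_le hr with heq | hr'
  · rw [← heq, zeroR hβ M ht]
    exact mul_nonneg (by linarith) (mul_nonneg (afun_nonneg hβ le_rfl) hb.le)
  · set n := ⌈r⌉₊ with hn
    have hn1 : 1 ≤ n := Nat.ceil_pos.mpr hr'
    have hrn : r ≤ (n:ℝ) := Nat.le_ceil r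
    have hn_lt : (n:ℝ) < r + 1 := by
      have := Nat.ceil_lt_add_one hr
      exact_mod_cast this
    have hn0 : (0:ℝ) ≤ (n:ℝ) := Nat.cast_nonneg n
    have hβrt0 : 0 ≤ β M r t := βnonneg hβ M hr ht
    have hβr0 : 0 ≤ β M r 0 := βnonneg hβ M hr le_rfl
    have hβnt : 0 ≤ β M (n:ℝ) t := βnonneg hβ M hn0 ht
    have h_rt_r0 : β M r t ≤ β M r 0 := antiT hβ M hr le_rfl ht
    have h_rt_nt : β M r t ≤ β M (n:ℝ) t := monoR hβ M ht hr hrn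
    have h_r0_n0 : β M r 0 ≤ β M (n:ℝ) 0 := monoR hβ M le_rfl hr hrn
    set P := Real.sqrt (β M r 0) with hPdef
    set Q := Real.sqrt (β M (n:ℝ) t) with hQdef
    set S := 1 + Real.sqrt (β M (n:ℝ) 0) with hSdef
    have hS1 : (1:ℝ) ≤ S := le_add_of_nonneg_right (Real.sqrt_nonneg _)
    have hP : 0 ≤ P := Real.sqrt_nonneg _
    have hPS : P ≤ S := by
      have := Real.sqrt_le_sqrt h_r0_n0
      rw [hPdef, hSdef]
      linarith
    have h1 : β M r t ≤ P * Q := by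
      have he : β M r t = Real.sqrt (β M r t * β M r t) := (Real.sqrt_mul_self hβrt0).symm
      rw [hPdef, hQdef, ← Real.sqrt_mul hβr0]
      rw [he]
      exact Real.sqrt_le_sqrt (mul_le_mul h_rt_r0 h_rt_nt hβrt0 hβr0)
    have hinv : (2:ℝ)⁻¹^(M+n) = ((2:ℝ)^(M+n))⁻¹ := by rw [inv_pow]
    have h2 : β M r t ≤ 2^(M+n) * (S * (P * bfun β t)) := by
      rcases le_or_gt (β M (n:ℝ) t) 1 with hc | hc
      · have hQ1 : Q ≤ 1 := Real.sqrt_le_one.mpr hc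
        have hlow := bfun_lower hβ M n ht
        rw [min_eq_right hQ1] at hlow
        rw [hinv] at hlow
        have hQb : Q ≤ 2^(M+n) * bfun β t := by
          have h2p : (0:ℝ) < 2^(M+n) := by positivity
          calc Q = 2^(M+n) * (((2:ℝ)^(M+n))⁻¹ * Q) := by field_simp
            _ ≤ 2^(M+n) * bfun β t := mul_le_mul_of_nonneg_left hlow h2p.le
        calc β M r t ≤ P * Q := h1
          _ ≤ P * (2^(M+n) * bfun β t) := mul_le_mul_of_nonneg_left hQb hP
          _ = 2^(M+n) * (1 * (P * bfun β t)) := by ring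
          _ ≤ 2^(M+n) * (S * (P * bfun β t)) := by
              apply mul_le_mul_of_nonneg_left _ (by positivity)
              exact mul_le_mul_of_nonneg_right hS1 (mul_nonneg hP hb.le)
      · have hQ1 : (1:ℝ) ≤ Q := by
          rw [hQdef]
          exact Real.one_le_sqrt.mpr hc.le
        have hlow := bfun_lower hβ M n ht
        rw [min_eq_left hQ1, mul_one, hinv] at hlow
        have h1b : (1:ℝ) ≤ 2^(M+n) * bfun β t := by
          calc (1:ℝ) = 2^(M+n) * ((2:ℝ)^(M+n))⁻¹ := by field_simp
            _ ≤ 2^(M+n) * bfun β t := mul_le_mul_of_nonneg_left hlow (by positivity)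
        have hPn : β M r 0 ≤ P * S := by
          have he : β M r 0 = P * P := (Real.mul_self_sqrt hβr0).symm
          calc β M r 0 = P * P := he
            _ ≤ P * S := mul_le_mul_of_nonneg_left hPS hP
        calc β M r t ≤ β M r 0 := h_rt_r0
          _ ≤ P * S := hPn
          _ = P * S * 1 := (mul_one _).symm
          _ ≤ P * S * (2^(M+n) * bfun β t) := by
              apply mul_le_mul_of_nonneg_left h1b
              exact mul_nonneg hP (by linarith)
          _ = 2^(M+n) * (S * (P * bfun β t)) := by ring
    have ha := afun_nonneg hβ hr
    rcases le_or_gt r (M:ℝ) with hrM | hrM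
    · have hnM : n ≤ M := Nat.ceil_le.mpr hrM
      have hnMr : ((n:ℕ):ℝ) ≤ (M:ℝ) := by exact_mod_cast hnM
      have hsm := sM_nonneg (β := β) M
      have hSsM : S ≤ 1 + sM β M := by
        rw [hSdef]
        have h4 := monoR hβ M le_rfl hn0 hnMr
        have := Real.sqrt_le_sqrt h4
        unfold sM
        linarith
      have hPa : P ≤ 2^M * (1 + sM β M) * afun β r := afun_sqrt_le hβ hr hrM
      have hpow : (2:ℝ)^(M+n) ≤ 2^(2*M) := by
        apply pow_le_pow_right₀ (by norm_num) (by omega)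
      have hstep : 2^(M+n) * (S * (P * bfun β t)) ≤
          2^(2*M) * ((1 + sM β M) * ((2^M * (1 + sM β M) * afun β r) * bfun β t)) := by
        have hSp : (0:ℝ) ≤ S := by linarith
        have h1s : (0:ℝ) ≤ 1 + sM β M := by linarith
        apply mul_le_mul hpow _ _ (by positivity)
        · apply mul_le_mul hSsM _ _ h1s
          · exact mul_le_mul_of_nonneg_right hPa hb.le
          · exact mul_nonneg hP hb.le
        · exact mul_nonneg hSp (mul_nonneg hP hb.le)
      have heq2 : 2^(2*M) * ((1 + sM β M) * ((2^M * (1 + sM β M) * afun β r) * bfun β t)) =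
          gseq β M * (afun β r * bfun β t) := by
        unfold gseq
        have hpp : (2:ℝ)^(2*M) * 2^M = 2^(3*M) := by
          rw [← pow_add]
          congr 1
          ring
        calc 2^(2*M) * ((1 + sM β M) * ((2^M * (1 + sM β M) * afun β r) * bfun β t))
            = ((2:ℝ)^(2*M) * 2^M) * ((1 + sM β M)^2 * (afun β r * bfun β t)) := by ring
          _ = 2^(3*M) * ((1 + sM β M)^2 * (afun β r * bfun β t)) := by rw [hpp]
          _ = 2^(3*M) * (1 + sM β M)^2 * (afun β r * bfun β t) := by ring
      have hfin : gseq β M * (afun β r * bfun β t) ≤ ghat β (M:ℝ) * (afun β r * bfun β t) :=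
        mul_le_mul_of_nonneg_right (ghat_ge (β := β) M hM).1 (mul_nonneg ha hb.le)
      calc β M r t ≤ 2^(M+n) * (S * (P * bfun β t)) := h2
        _ ≤ 2^(2*M) * ((1 + sM β M) * ((2^M * (1 + sM β M) * afun β r) * bfun β t)) := hstep
        _ = gseq β M * (afun β r * bfun β t) := heq2
        _ ≤ ghat β (M:ℝ) * (afun β r * bfun β t) := hfin
    · have hMn : M < n := by
        have : (M:ℝ) < (n:ℝ) := lt_of_lt_of_le hrM hrn
        exact_mod_cast this
      have hn2 : 2 ≤ n := by omega
      have hn1r : (n:ℝ) - 1 ≤ r := by linarith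
      have hpow : (2:ℝ)^(M+n) ≤ 2^(2*n) := by
        apply pow_le_pow_right₀ (by norm_num) (by omega)
      have hSp : (0:ℝ) ≤ S := by linarith
      have hstep : 2^(M+n) * (S * (P * bfun β t)) ≤ 2^(2*n) * S^2 * bfun β t := by
        have h5 : S * (P * bfun β t) ≤ S^2 * bfun β t := by
          have : S * (P * bfun β t) = (S * P) * bfun β t := by ring
          rw [this, sq]
          apply mul_le_mul_of_nonneg_right _ hb.le
          exact mul_le_mul_of_nonneg_left hPS hSp
        calc 2^(M+n) * (S * (P * bfun β t)) ≤ 2^(2*n) * (S * (P * bfun β t)) := by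
              apply mul_le_mul_of_nonneg_right hpow
              exact mul_nonneg hSp (mul_nonneg hP hb.le)
          _ ≤ 2^(2*n) * (S^2 * bfun β t) := by
              exact mul_le_mul_of_nonneg_left h5 (by positivity)
          _ = 2^(2*n) * S^2 * bfun β t := by ring
      have hcs : 2^(2*n) * S^2 ≤ cseq β n := by
        rw [hSdef]
        exact cseq_single (β := β) hMn.le
      have hca : cseq β n ≤ afun β r := afun_lower2 hβ hn2 hn1r
      calc β M r t ≤ 2^(M+n) * (S * (P * bfun β t)) := h2
        _ ≤ 2^(2*n) * S^2 * bfun β t := hstep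
        _ ≤ afun β r * bfun β t := by
            apply mul_le_mul_of_nonneg_right _ hb.le
            exact hcs.trans hca
        _ = 1 * (afun β r * bfun β t) := (one_mul _).symm
        _ ≤ ghat β (M:ℝ) * (afun β r * bfun β t) := by
            apply mul_le_mul_of_nonneg_right hg1
            exact mul_nonneg ha hb.le

end main


/-- Given a countable family of class-KL functions, there exist a class-K∞ function γ̂ and a
class-KL function β̂ with β_M(r,t) ≤ γ̂(M)·β̂(r,t) for all r, t ≥ 0 and integers M ≥ 1. -/
theorem stmt4 (β : ℕ → ℝ → ℝ → ℝ) (hβ : ∀ M : ℕ, ClassKL (β M)) :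
    ∃ γhat : ℝ → ℝ, ∃ βhat : ℝ → ℝ → ℝ, ClassKInf γhat ∧ ClassKL βhat ∧
      ∀ M : ℕ, 1 ≤ M → ∀ r t : ℝ, 0 ≤ r → 0 ≤ t →
        β M r t ≤ γhat (M : ℝ) * βhat r t := by
  refine ⟨ghat β, fun r t => afun β r * bfun β t, ghat_classKInf (β := β), ⟨?_, ?_⟩, ?_⟩
  · intro t ht
    refine ⟨((afun_continuous hβ).mul continuous_const).continuousOn, ?_, ?_⟩
    · intro x _ y _ hxy
      exact mul_lt_mul_of_pos_right (afun_strictMono hβ hxy) (bfun_pos hβ t)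
    · show afun β 0 * bfun β t = 0
      rw [afun_zero hβ, zero_mul]
  · intro r hr
    constructor
    · intro t1 _ t2 _ h12
      exact mul_le_mul_of_nonneg_left (bfun_anti hβ h12) (afun_nonneg hβ hr)
    · have := (bfun_tendsto hβ).const_mul (afun β r)
      simpa using this
  · intro M hM r t hr ht
    exact key hβ M hM r t hr ht
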